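/- Let $v$ be a Schwartz function on $\mathbb{R}^2$ with Fourier transform $\hat{v}(\xi,\eta) = \iint e^{-i(x\xi+y\eta)} v(x,y)\, dx\, dy$. Then for every $t \in (0, \pi/2)$ and all $(x,y) \in \mathbb{R}^2$: $(2\pi)^{-2} \sec^2 t \iint \exp\big(i[(x\xi + y\eta)\sec t - (xy + \xi\eta)\tan t]\big)\, \hat{v}(\xi,\eta)\, d\xi\, d\eta \cdot \cos t = (2\pi)^{-1} (\sin t)^{-1} \iint v(a,b) \exp\Big( i\, \frac{(xy + ab)\cos t - (ay + xb)}{\sin t} \Big)\, da\, db$; that is, the oscillatory-integral expression $(2\pi)^{-2}\sec t \iint e^{i[(x\xi+y\eta)\sec t - (xy+\xi\eta)\tan t]} \hat{v}(\xi,\eta)\, d\xi\, d\eta$ equals the gyrator transform $(2\pi)^{-1}(\sin t)^{-1} \iint v(a,b)\, e^{i((xy+ab)\cos t - (ay+xb))/\sin t}\, da\, db$. -/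

import Mathlib

noncomputable section

open MeasureTheory Real Complex FourierTransform
open scoped RealInnerProductSpace

/-- The Fourier transform of `v`, `v̂(ξ,η) = ∬ e^{-i(xξ+yη)} v(x,y) dx dy`. -/
def fourier2 (v : SchwartzMap (ℝ × ℝ) ℂ) (w : ℝ × ℝ) : ℂ :=
  ∫ q : ℝ × ℝ, Complex.exp (-Complex.I * ((q.1 : ℂ) * (w.1 : ℂ) + (q.2 : ℂ) * (w.2 : ℂ))) * v q

abbrev E2 := EuclideanSpace ℝ (Fin 2)

def ψ : E2 ≃L[ℝ] ℝ × ℝ :=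
  (EuclideanSpace.equiv (Fin 2) ℝ).trans (ContinuousLinearEquiv.finTwoArrow ℝ ℝ)

def mE : E2 ≃ᵐ ℝ × ℝ :=
  (MeasurableEquiv.toLp 2 (Fin 2 → ℝ)).symm.trans (MeasurableEquiv.finTwoArrow)

lemma coe_mE : (mE : E2 → ℝ × ℝ) = ψ := rfl

lemma mE_mp : MeasurePreserving mE :=
  (volume_preserving_finTwoArrow ℝ).comp (EuclideanSpace.volume_preserving_symm_measurableEquiv_toLp (Fin 2))

lemma inner_symm (p : E2) (w : ℝ × ℝ) :
    ⟪p, ψ.symm w⟫ = p 0 * w.1 + p 1 * w.2 := by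
  simp [ψ, PiLp.inner_apply, Fin.sum_univ_two]
  ring

def sch (v : SchwartzMap (ℝ × ℝ) ℂ) : SchwartzMap E2 ℂ :=
  SchwartzMap.compCLMOfContinuousLinearEquiv ℝ ψ v

lemma fourier2_eq (v : SchwartzMap (ℝ × ℝ) ℂ) (w : ℝ × ℝ) :
    fourier2 v w = 𝓕 (sch v) ((2 * π)⁻¹ • ψ.symm w) := by
  rw [SchwartzMap.fourier_coe, Real.fourier_eq']
  rw [fourier2, ← mE_mp.integral_comp']
  congr 1 with p
  rw [real_inner_smul_right, inner_symm]
  have h2 : (sch v) p = v (mE p) := rfl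
  rw [h2, smul_eq_mul]
  congr 2
  have : (mE p).1 = p 0 ∧ (mE p).2 = p 1 := ⟨rfl, rfl⟩
  push_cast
  rw [this.1, this.2]
  have hπ : (π : ℂ) ≠ 0 := by exact_mod_cast Real.pi_ne_zero
  field_simp

lemma fourier2_continuous (v : SchwartzMap (ℝ × ℝ) ℂ) : Continuous (fourier2 v) := by
  have : fourier2 v = fun w => (SchwartzMap.fourierTransformCLM ℝ (sch v)) ((2 * π)⁻¹ • ψ.symm w) := by
    funext w; rw [fourier2_eq, SchwartzMap.fourierTransformCLM_apply]
  rw [this]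
  exact (SchwartzMap.fourierTransformCLM ℝ (sch v)).2.continuous.comp
    (by fun_prop)

lemma coe_mE_symm : (mE.symm : ℝ × ℝ → E2) = ψ.symm := by
  funext z
  apply ψ.injective
  have h1 : ψ (mE.symm z) = mE (mE.symm z) := by rw [← coe_mE]
  rw [h1, mE.apply_symm_apply, ψ.apply_symm_apply]

lemma fourier2_integrable (v : SchwartzMap (ℝ × ℝ) ℂ) : Integrable (fourier2 v) := by
  have h : fourier2 v = (fun z : E2 => (SchwartzMap.fourierTransformCLM ℝ (sch v)) ((2 * π)⁻¹ • z)) ∘ mE.symm := by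
    funext w
    rw [fourier2_eq, SchwartzMap.fourierTransformCLM_apply, Function.comp_apply, coe_mE_symm]
  rw [h]
  have hint : Integrable (fun z : E2 => (SchwartzMap.fourierTransformCLM ℝ (sch v)) ((2 * π)⁻¹ • z)) := by
    refine Integrable.comp_smul ?_ (R := (2 * π)⁻¹) (by positivity)
    exact SchwartzMap.integrable _
  exact (mE_mp.symm mE).integrable_comp_emb (mE.symm.measurableEmbedding) |>.mpr hint

lemma cpow_half (r : ℝ) (hr : 0 < r) : ((r : ℂ)) ^ (1/2 : ℂ) = (Real.sqrt r : ℂ) := by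
  rw [show ((1:ℂ)/2) = ((1/2 : ℝ) : ℂ) by norm_num, ← Complex.ofReal_cpow hr.le]
  rw [← Real.sqrt_eq_rpow]

lemma norm_cexp_mix (r s : ℝ) : ‖Complex.exp ((r : ℂ) + (s : ℂ) * Complex.I)‖ = Real.exp r := by
  rw [Complex.norm_exp]
  simp

lemma sqrt_prod_eq (ε c : ℝ) (hε : 0 < ε) :
    Real.sqrt (π/ε) * Real.sqrt (π/(ε + c^2/(4*ε))) = 2*π/Real.sqrt (4*ε^2 + c^2) := by
  have hb : 0 < ε + c^2/(4*ε) := by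
    have : 0 ≤ c^2/(4*ε) := by positivity
    linarith
  have hX : 0 < 4*ε^2 + c^2 := by positivity
  rw [← Real.sqrt_mul (by positivity)]
  rw [show π/ε * (π/(ε + c^2/(4*ε))) = (2*π)^2 / (4*ε^2 + c^2) by field_simp; ring]
  rw [Real.sqrt_div (sq_nonneg (2*π)), Real.sqrt_sq (by positivity : (0:ℝ) ≤ 2*π)]

lemma gauss2 (ε c A B : ℝ) (hε : 0 < ε) :
    ∫ w : ℝ × ℝ, Complex.exp (-(ε:ℂ) * w.1^2 - (ε:ℂ) * w.2^2 - Complex.I * c * (w.1*w.2)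
        + Complex.I * A * w.1 + Complex.I * B * w.2)
      = ((2 * π / Real.sqrt (4*ε^2 + c^2) : ℝ) : ℂ) *
        Complex.exp ((((-ε * (A^2+B^2) : ℝ) : ℂ) + Complex.I * ((A*B*c : ℝ) : ℂ)) / ((4*ε^2+c^2 : ℝ) : ℂ)) := by
  have hb2r : 0 < ε + c^2/(4*ε) := by
    have : 0 ≤ c^2/(4*ε) := by positivity
    linarith
  have hX : 0 < 4*ε^2 + c^2 := by positivity
  set f : ℝ × ℝ → ℂ := fun w => Complex.exp (-(ε:ℂ) * w.1^2 - (ε:ℂ) * w.2^2 - Complex.I * c * (w.1*w.2)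
        + Complex.I * A * w.1 + Complex.I * B * w.2) with hf_def
  have key : ∀ w : ℝ × ℝ, (-(ε:ℂ) * w.1^2 - (ε:ℂ) * w.2^2 - Complex.I * c * (w.1*w.2)
        + Complex.I * A * w.1 + Complex.I * B * w.2)
      = ((-ε * w.1^2 - ε * w.2^2 : ℝ) : ℂ) + ((A*w.1 + B*w.2 - c*(w.1*w.2) : ℝ) : ℂ) * Complex.I := by
    intro w; push_cast; ring
  have hnorm : ∀ w : ℝ × ℝ, ‖f w‖ = Real.exp (-ε * w.1^2) * Real.exp (-ε * w.2^2) := by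
    intro w
    rw [hf_def]; dsimp only
    rw [key w, norm_cexp_mix, ← Real.exp_add]
    congr 1
    ring
  have hcont : Continuous f := by
    apply Complex.continuous_exp.comp
    fun_prop
  have hf : Integrable f := by
    have hg : Integrable (fun w : ℝ × ℝ => Real.exp (-ε*w.1^2) * Real.exp (-ε*w.2^2)) := by
      have := (integrable_exp_neg_mul_sq hε).mul_prod (integrable_exp_neg_mul_sq hε)
      rw [← Measure.volume_eq_prod] at this
      simpa [neg_mul] using this
    refine hg.mono' hcont.aestronglyMeasurable ?_
    filter_upwards with w
    rw [hnorm w]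
  rw [Measure.volume_eq_prod ℝ ℝ]
  rw [Measure.volume_eq_prod ℝ ℝ] at hf
  rw [MeasureTheory.integral_prod _ hf]
  have h1 : ∀ ξ : ℝ, (∫ η : ℝ, f (ξ, η))
      = ((π/ε : ℝ) : ℂ)^(1/2:ℂ) * Complex.exp ((-(ε:ℂ)*ξ^2 + Complex.I*A*ξ)
          - (Complex.I*B - Complex.I*c*ξ)^2 / (4 * (-(ε:ℂ)))) := by
    intro ξ
    have e1 : ∀ η : ℝ, f (ξ, η) = Complex.exp ((-(ε:ℂ)) * η^2 + (Complex.I*B - Complex.I*c*ξ) * η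
        + (-(ε:ℂ)*ξ^2 + Complex.I*A*ξ)) := by
      intro η; rw [hf_def]; dsimp only; congr 1; push_cast; ring
    simp_rw [e1]
    rw [integral_cexp_quadratic (by simpa using hε) _ _]
    congr 2
    push_cast
    ring
  simp_rw [h1]
  rw [MeasureTheory.integral_const_mul]
  have h2 : ∀ ξ : ℝ, ((-(ε:ℂ)*ξ^2 + Complex.I*A*ξ) - (Complex.I*B - Complex.I*c*ξ)^2 / (4 * (-(ε:ℂ))))
      = ((-(ε + c^2/(4*ε)) : ℝ) : ℂ) * ξ^2 + (Complex.I*A + ((B*c/(2*ε) : ℝ) : ℂ)) * ξ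
        + ((-(B^2/(4*ε)) : ℝ) : ℂ) := by
    intro ξ
    have hI := Complex.I_sq
    have hε' : (ε : ℂ) ≠ 0 := by exact_mod_cast hε.ne'
    have hsq : (Complex.I*B - Complex.I*c*ξ)^2 = -((B:ℂ) - c*ξ)^2 := by
      linear_combination ((B:ℂ) - c*ξ)^2 * hI
    rw [hsq]
    push_cast
    field_simp
    ring
  simp_rw [h2]
  rw [integral_cexp_quadratic (by simp only [Complex.ofReal_re]; linarith) _ _]
  rw [show (↑π / -((↑(-(ε + c^2/(4*ε)) : ℝ)) : ℂ)) = ((π/(ε + c^2/(4*ε)) : ℝ) : ℂ) by push_cast; ring]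
  rw [cpow_half _ (by positivity), cpow_half _ (by positivity)]
  rw [← mul_assoc, ← Complex.ofReal_mul, sqrt_prod_eq ε c hε]
  congr 2
  have hε' : (ε : ℂ) ≠ 0 := by exact_mod_cast hε.ne'
  have hX' : ((4*ε^2+c^2 : ℝ) : ℂ) ≠ 0 := by exact_mod_cast hX.ne'
  have h4b : (4 : ℂ) * ((-(ε + c^2/(4*ε)) : ℝ) : ℂ) = -(((4*ε^2+c^2 : ℝ) : ℂ) / (ε:ℂ)) := by
    push_cast
    field_simp
  rw [h4b, div_neg, div_div_eq_mul_div, sub_neg_eq_add, eq_div_iff hX', add_mul, div_mul_cancel₀ _ hX']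
  push_cast
  field_simp
  ring_nf
  rw [Complex.I_sq]
  ring

lemma gauss_integrable (ε : ℝ) (hε : 0 < ε) :
    Integrable (fun w : ℝ × ℝ => Real.exp (-ε*w.1^2) * Real.exp (-ε*w.2^2)) := by
  have := (integrable_exp_neg_mul_sq hε).mul_prod (integrable_exp_neg_mul_sq hε)
  rw [← Measure.volume_eq_prod] at this
  simpa [neg_mul] using this

lemma step_fubini (v : SchwartzMap (ℝ × ℝ) ℂ) (x y c co ε : ℝ) (hε : 0 < ε) :
    ∫ w : ℝ × ℝ, Complex.exp (-(ε:ℂ)*w.1^2 - (ε:ℂ)*w.2^2) *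
        (Complex.exp (Complex.I * (((x : ℂ) * w.1 + (y : ℂ) * w.2) * ((co⁻¹ : ℝ) : ℂ) -
          ((x : ℂ) * y + (w.1 : ℂ) * w.2) * ((c : ℝ) : ℂ))) * fourier2 v w)
      = ∫ q : ℝ × ℝ, v q * (Complex.exp (-Complex.I * ((x*y*c : ℝ) : ℂ)) *
          (((2 * π / Real.sqrt (4*ε^2 + c^2) : ℝ) : ℂ) *
            Complex.exp ((((-ε * ((x*co⁻¹ - q.1)^2+(y*co⁻¹ - q.2)^2) : ℝ) : ℂ)
              + Complex.I * (((x*co⁻¹ - q.1)*(y*co⁻¹ - q.2)*c : ℝ) : ℂ)) / ((4*ε^2+c^2 : ℝ) : ℂ)))) := by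
  set F : (ℝ × ℝ) → (ℝ × ℝ) → ℂ := fun w q =>
    Complex.exp (-(ε:ℂ)*w.1^2 - (ε:ℂ)*w.2^2
      + Complex.I * (((x : ℂ) * w.1 + (y : ℂ) * w.2) * ((co⁻¹ : ℝ) : ℂ) -
          ((x : ℂ) * y + (w.1 : ℂ) * w.2) * ((c : ℝ) : ℂ))
      + (-Complex.I * ((q.1 : ℂ) * (w.1 : ℂ) + (q.2 : ℂ) * (w.2 : ℂ)))) * v q with hF
  have keyF : ∀ w q : ℝ × ℝ, (-(ε:ℂ)*w.1^2 - (ε:ℂ)*w.2^2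
      + Complex.I * (((x : ℂ) * w.1 + (y : ℂ) * w.2) * ((co⁻¹ : ℝ) : ℂ) -
          ((x : ℂ) * y + (w.1 : ℂ) * w.2) * ((c : ℝ) : ℂ))
      + (-Complex.I * ((q.1 : ℂ) * (w.1 : ℂ) + (q.2 : ℂ) * (w.2 : ℂ))))
      = ((-ε*w.1^2 - ε*w.2^2 : ℝ) : ℂ)
        + (((x*w.1 + y*w.2)*co⁻¹ - (x*y + w.1*w.2)*c - (q.1*w.1 + q.2*w.2) : ℝ) : ℂ) * Complex.I := by
    intro w q; push_cast; ring
  have hFcont : Continuous (fun z : (ℝ × ℝ) × (ℝ × ℝ) => F z.1 z.2) := by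
    apply Continuous.mul
    · apply Complex.continuous_exp.comp
      fun_prop
    · exact v.continuous.comp continuous_snd
  have hFint : Integrable (Function.uncurry F) ((volume : Measure (ℝ × ℝ)).prod volume) := by
    rw [← Measure.volume_eq_prod (ℝ × ℝ) (ℝ × ℝ)]
    have hg : Integrable (fun z : (ℝ × ℝ) × (ℝ × ℝ) =>
        (Real.exp (-ε*z.1.1^2) * Real.exp (-ε*z.1.2^2)) * ‖v z.2‖) := by
      have := (gauss_integrable ε hε).mul_prod ((v.integrable (μ := volume)).norm)
      rw [← Measure.volume_eq_prod (ℝ × ℝ) (ℝ × ℝ)] at this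
      exact this
    refine hg.mono' hFcont.aestronglyMeasurable ?_
    filter_upwards with z
    have : ‖F z.1 z.2‖ = Real.exp (-ε*z.1.1^2 - ε*z.1.2^2) * ‖v z.2‖ := by
      rw [hF]; dsimp only
      rw [norm_mul, keyF, norm_cexp_mix]
    rw [Function.uncurry, this, ← Real.exp_add]
    gcongr <;> simp [le_refl]
  have h1 : ∀ w : ℝ × ℝ, Complex.exp (-(ε:ℂ)*w.1^2 - (ε:ℂ)*w.2^2) *
        (Complex.exp (Complex.I * (((x : ℂ) * w.1 + (y : ℂ) * w.2) * ((co⁻¹ : ℝ) : ℂ) -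
          ((x : ℂ) * y + (w.1 : ℂ) * w.2) * ((c : ℝ) : ℂ))) * fourier2 v w)
      = ∫ q : ℝ × ℝ, F w q := by
    intro w
    rw [fourier2, ← MeasureTheory.integral_const_mul, ← MeasureTheory.integral_const_mul]
    congr 1 with q
    rw [hF]; dsimp only
    rw [← mul_assoc, ← mul_assoc, ← Complex.exp_add, ← Complex.exp_add]
  simp_rw [h1]
  rw [MeasureTheory.integral_integral_swap hFint]
  congr 1 with q
  have h2 : ∀ w : ℝ × ℝ, (-(ε:ℂ)*w.1^2 - (ε:ℂ)*w.2^2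
      + Complex.I * (((x : ℂ) * w.1 + (y : ℂ) * w.2) * ((co⁻¹ : ℝ) : ℂ) -
          ((x : ℂ) * y + (w.1 : ℂ) * w.2) * ((c : ℝ) : ℂ))
      + (-Complex.I * ((q.1 : ℂ) * (w.1 : ℂ) + (q.2 : ℂ) * (w.2 : ℂ))))
      = (-(ε:ℂ) * w.1^2 - (ε:ℂ) * w.2^2 - Complex.I * ((c:ℝ):ℂ) * (w.1*w.2)
        + Complex.I * (((x*co⁻¹ - q.1 : ℝ)):ℂ) * w.1 + Complex.I * (((y*co⁻¹ - q.2 : ℝ)):ℂ) * w.2)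
        + (-Complex.I * ((x*y*c : ℝ) : ℂ)) := by
    intro w; push_cast; ring
  calc ∫ w : ℝ × ℝ, F w q
      = (∫ w : ℝ × ℝ, Complex.exp (-(ε:ℂ) * w.1^2 - (ε:ℂ) * w.2^2 - Complex.I * ((c:ℝ):ℂ) * (w.1*w.2)
          + Complex.I * (((x*co⁻¹ - q.1 : ℝ)):ℂ) * w.1 + Complex.I * (((y*co⁻¹ - q.2 : ℝ)):ℂ) * w.2))
        * (Complex.exp (-Complex.I * ((x*y*c : ℝ) : ℂ)) * v q) := by
        rw [← MeasureTheory.integral_mul_const]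
        congr 1 with w
        rw [hF]; dsimp only
        rw [h2 w, Complex.exp_add]
        ring
    _ = _ := by
        rw [gauss2 ε c _ _ hε]
        ring

/-- **Exact stationary phase for the gyrator.** For `0 < t < π/2`, the oscillatory
integral `(2π)⁻² sec t ∬ e^{i[(xξ+yη)sec t - (xy+ξη)tan t]} v̂(ξ,η) dξ dη` equals the
gyrator transform `(2π)⁻¹(sin t)⁻¹ ∬ v(a,b) e^{i((xy+ab)cos t - (ay+xb))/sin t} da db`. -/
theorem gyrator_transform_eq_oscillatory_integral
    (v : SchwartzMap (ℝ × ℝ) ℂ) (t : ℝ) (ht : t ∈ Set.Ioo 0 (Real.pi / 2)) (x y : ℝ) :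
    (((2 * Real.pi) ^ 2)⁻¹ : ℝ) * (((Real.cos t)⁻¹ : ℝ) : ℂ) *
        ∫ w : ℝ × ℝ, Complex.exp (Complex.I *
          ((((x : ℂ) * w.1 + (y : ℂ) * w.2)) * (((Real.cos t)⁻¹ : ℝ) : ℂ) -
            (((x : ℂ) * y + (w.1 : ℂ) * w.2)) * ((Real.tan t : ℝ) : ℂ))) * fourier2 v w =
      ((2 * Real.pi)⁻¹ : ℝ) * (((Real.sin t)⁻¹ : ℝ) : ℂ) *
        ∫ q : ℝ × ℝ, v q * Complex.exp (Complex.I *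
          ((((x : ℂ) * y + (q.1 : ℂ) * q.2) * ((Real.cos t : ℝ) : ℂ) -
            ((q.1 : ℂ) * y + (x : ℂ) * q.2)) / ((Real.sin t : ℝ) : ℂ))) := by
  obtain ⟨ht0, ht2⟩ := ht
  set co := Real.cos t with hco_def
  set s := Real.sin t with hs_def
  set c := Real.tan t with hc_def
  have hco : 0 < co := Real.cos_pos_of_mem_Ioo ⟨by linarith [Real.pi_pos], ht2⟩
  have hs : 0 < s := Real.sin_pos_of_pos_of_lt_pi ht0 (by linarith [Real.pi_pos])
  have hc : 0 < c := by rw [hc_def, Real.tan_eq_sin_div_cos]; positivity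
  have hπ : (0:ℝ) < π := Real.pi_pos
  set l : Filter ℝ := nhdsWithin 0 (Set.Ioi 0) with hl_def
  have hle : l ≤ nhds (0:ℝ) := nhdsWithin_le_nhds
  -- the ε-regularized LHS integral
  set Lfun : ℝ → ℂ := fun ε => ∫ w : ℝ × ℝ, Complex.exp (-(ε:ℂ)*w.1^2 - (ε:ℂ)*w.2^2) *
        (Complex.exp (Complex.I * (((x : ℂ) * w.1 + (y : ℂ) * w.2) * ((co⁻¹ : ℝ) : ℂ) -
          ((x : ℂ) * y + (w.1 : ℂ) * w.2) * ((c : ℝ) : ℂ))) * fourier2 v w) with hLfun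
  set K : ℝ → (ℝ × ℝ) → ℂ := fun ε q =>
      ((2 * π / Real.sqrt (4*ε^2 + c^2) : ℝ) : ℂ) *
        Complex.exp ((((-ε * ((x*co⁻¹ - q.1)^2+(y*co⁻¹ - q.2)^2) : ℝ) : ℂ)
          + Complex.I * (((x*co⁻¹ - q.1)*(y*co⁻¹ - q.2)*c : ℝ) : ℂ)) / ((4*ε^2+c^2 : ℝ) : ℂ)) with hK
  set Rfun : ℝ → ℂ := fun ε => ∫ q : ℝ × ℝ, v q *
      (Complex.exp (-Complex.I * ((x*y*c : ℝ) : ℂ)) * K ε q) with hRfun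
  have hP : ∀ w : ℝ × ℝ, Complex.I * (((x : ℂ) * w.1 + (y : ℂ) * w.2) * ((co⁻¹ : ℝ) : ℂ) -
      ((x : ℂ) * y + (w.1 : ℂ) * w.2) * ((c : ℝ) : ℂ))
      = ((0:ℝ):ℂ) + (((x*w.1 + y*w.2)*co⁻¹ - (x*y + w.1*w.2)*c : ℝ) : ℂ) * Complex.I := by
    intro w; push_cast; ring
  -- Step A
  have stepA : Filter.Tendsto Lfun l (nhds (∫ w : ℝ × ℝ, Complex.exp (Complex.I *
      (((x : ℂ) * w.1 + (y : ℂ) * w.2) * ((co⁻¹ : ℝ) : ℂ) -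
        ((x : ℂ) * y + (w.1 : ℂ) * w.2) * ((c : ℝ) : ℂ))) * fourier2 v w)) := by
    refine MeasureTheory.tendsto_integral_filter_of_dominated_convergence
      (fun w => ‖fourier2 v w‖) ?_ ?_ ((fourier2_integrable v).norm) ?_
    · filter_upwards with ε
      refine Continuous.aestronglyMeasurable ?_
      exact ((Complex.continuous_exp.comp (by fun_prop)).mul
        ((Complex.continuous_exp.comp (by fun_prop)).mul (fourier2_continuous v)))
    · filter_upwards [self_mem_nhdsWithin] with ε (hε : ε ∈ Set.Ioi (0:ℝ))
      refine Filter.Eventually.of_forall fun w => ?_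
      rw [norm_mul, norm_mul]
      have h1 : ‖Complex.exp (-(ε:ℂ)*w.1^2 - (ε:ℂ)*w.2^2)‖ ≤ 1 := by
        rw [show -(ε:ℂ)*w.1^2 - (ε:ℂ)*w.2^2 = ((-ε*w.1^2 - ε*w.2^2 : ℝ):ℂ) + ((0:ℝ):ℂ) * Complex.I
          by push_cast; ring, norm_cexp_mix]
        rw [Real.exp_le_one_iff]
        nlinarith [sq_nonneg w.1, sq_nonneg w.2, hε.out]
      have h2 : ‖Complex.exp (Complex.I * (((x : ℂ) * w.1 + (y : ℂ) * w.2) * ((co⁻¹ : ℝ) : ℂ) -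
          ((x : ℂ) * y + (w.1 : ℂ) * w.2) * ((c : ℝ) : ℂ)))‖ = 1 := by
        rw [hP w, norm_cexp_mix, Real.exp_zero]
      rw [h2, one_mul]
      nlinarith [norm_nonneg (fourier2 v w), norm_nonneg (Complex.exp (-(ε:ℂ)*w.1^2 - (ε:ℂ)*w.2^2))]
    · refine Filter.Eventually.of_forall fun w => ?_
      have hcont : ContinuousAt (fun ε : ℝ => Complex.exp (-(ε:ℂ)*w.1^2 - (ε:ℂ)*w.2^2) *
          (Complex.exp (Complex.I * (((x : ℂ) * w.1 + (y : ℂ) * w.2) * ((co⁻¹ : ℝ) : ℂ) -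
            ((x : ℂ) * y + (w.1 : ℂ) * w.2) * ((c : ℝ) : ℂ))) * fourier2 v w)) 0 := by
        refine ContinuousAt.mul ?_ continuousAt_const
        exact (Complex.continuous_exp.comp (by fun_prop)).continuousAt
      have := hcont.tendsto.mono_left hle
      simpa using this
  -- Step B
  have stepB : ∀ᶠ ε in l, Lfun ε = Rfun ε := by
    filter_upwards [self_mem_nhdsWithin] with ε (hε : ε ∈ Set.Ioi (0:ℝ))
    exact step_fubini v x y c co ε hε.out
  -- Step C
  have stepC : Filter.Tendsto Rfun l (nhds (∫ q : ℝ × ℝ, v q *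
      (Complex.exp (-Complex.I * ((x*y*c : ℝ) : ℂ)) * K 0 q))) := by
    refine MeasureTheory.tendsto_integral_filter_of_dominated_convergence
      (fun q => 2 * π / c * ‖v q‖) ?_ ?_ (((v.integrable (μ := volume)).norm).const_mul _) ?_
    · filter_upwards with ε
      refine Continuous.aestronglyMeasurable (v.continuous.mul (continuous_const.mul ?_))
      refine continuous_const.mul (Complex.continuous_exp.comp ?_)
      exact Continuous.div_const (by fun_prop) _
    · filter_upwards [self_mem_nhdsWithin] with ε (hε : ε ∈ Set.Ioi (0:ℝ))
      refine Filter.Eventually.of_forall fun q => ?_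
      have hd : (0:ℝ) < 4*ε^2 + c^2 := by positivity
      rw [norm_mul, norm_mul, norm_mul]
      have e1 : ‖Complex.exp (-Complex.I * ((x*y*c : ℝ) : ℂ))‖ = 1 := by
        rw [show -Complex.I * ((x*y*c : ℝ) : ℂ) = ((0:ℝ):ℂ) + ((-(x*y*c) : ℝ):ℂ) * Complex.I
          by push_cast; ring, norm_cexp_mix, Real.exp_zero]
      have e2 : ‖((2 * π / Real.sqrt (4*ε^2 + c^2) : ℝ) : ℂ)‖ ≤ 2 * π / c := by
        have habs : |2 * π / Real.sqrt (4*ε^2 + c^2)| = 2 * π / Real.sqrt (4*ε^2 + c^2) :=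
          abs_of_nonneg (by positivity)
        rw [Complex.norm_real, Real.norm_eq_abs, habs]
        apply div_le_div_of_nonneg_left (by positivity) hc
        calc c = Real.sqrt (c^2) := (Real.sqrt_sq hc.le).symm
        _ ≤ Real.sqrt (4*ε^2 + c^2) := Real.sqrt_le_sqrt (by nlinarith)
      have e3 : ‖Complex.exp ((((-ε * ((x*co⁻¹ - q.1)^2+(y*co⁻¹ - q.2)^2) : ℝ) : ℂ)
          + Complex.I * (((x*co⁻¹ - q.1)*(y*co⁻¹ - q.2)*c : ℝ) : ℂ)) / ((4*ε^2+c^2 : ℝ) : ℂ))‖ ≤ 1 := by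
        rw [show ((((-ε * ((x*co⁻¹ - q.1)^2+(y*co⁻¹ - q.2)^2) : ℝ) : ℂ)
            + Complex.I * (((x*co⁻¹ - q.1)*(y*co⁻¹ - q.2)*c : ℝ) : ℂ)) / ((4*ε^2+c^2 : ℝ) : ℂ))
          = ((-ε * ((x*co⁻¹ - q.1)^2+(y*co⁻¹ - q.2)^2) / (4*ε^2+c^2) : ℝ) : ℂ)
            + (((x*co⁻¹ - q.1)*(y*co⁻¹ - q.2)*c / (4*ε^2+c^2) : ℝ) : ℂ) * Complex.I
          by push_cast; ring, norm_cexp_mix, Real.exp_le_one_iff]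
        apply div_nonpos_of_nonpos_of_nonneg
        · nlinarith [sq_nonneg (x*co⁻¹ - q.1), sq_nonneg (y*co⁻¹ - q.2), hε.out]
        · exact hd.le
      rw [e1, one_mul]
      calc ‖v q‖ * (‖((2 * π / Real.sqrt (4*ε^2 + c^2) : ℝ) : ℂ)‖ * ‖Complex.exp _‖)
          ≤ ‖v q‖ * (2 * π / c * 1) := by
            gcongr
        _ = 2 * π / c * ‖v q‖ := by ring
    · refine Filter.Eventually.of_forall fun q => ?_
      have hsq : Real.sqrt (4*(0:ℝ)^2 + c^2) ≠ 0 := by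
        rw [show 4*(0:ℝ)^2 + c^2 = c^2 by ring, Real.sqrt_sq hc.le]; exact hc.ne'
      have hd0 : ((4*(0:ℝ)^2 + c^2 : ℝ) : ℂ) ≠ 0 := by
        rw [Complex.ofReal_ne_zero]; nlinarith
      have hcontK : ContinuousAt (fun ε : ℝ => v q *
          (Complex.exp (-Complex.I * ((x*y*c : ℝ) : ℂ)) * K ε q)) 0 := by
        refine ContinuousAt.mul continuousAt_const (ContinuousAt.mul continuousAt_const ?_)
        rw [hK]
        refine ContinuousAt.mul ?_ ?_
        · refine Complex.continuous_ofReal.continuousAt.comp ?_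
          exact ContinuousAt.div continuousAt_const
            ((Real.continuous_sqrt.comp (by fun_prop)).continuousAt) hsq
        · refine Complex.continuous_exp.continuousAt.comp ?_
          exact ContinuousAt.div (by fun_prop) (by fun_prop) hd0
      exact hcontK.tendsto.mono_left hle
  -- combine
  have hmain : (∫ w : ℝ × ℝ, Complex.exp (Complex.I *
      (((x : ℂ) * w.1 + (y : ℂ) * w.2) * ((co⁻¹ : ℝ) : ℂ) -
        ((x : ℂ) * y + (w.1 : ℂ) * w.2) * ((c : ℝ) : ℂ))) * fourier2 v w)
      = ∫ q : ℝ × ℝ, v q * (Complex.exp (-Complex.I * ((x*y*c : ℝ) : ℂ)) * K 0 q) :=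
    tendsto_nhds_unique (stepA.congr' stepB) stepC
  rw [hmain, ← MeasureTheory.integral_const_mul, ← MeasureTheory.integral_const_mul]
  congr 1 with q
  rw [hK]
  dsimp only
  rw [show Real.sqrt (4*(0:ℝ)^2 + c^2) = c by
    rw [show 4*(0:ℝ)^2 + c^2 = c^2 by ring, Real.sqrt_sq hc.le]]
  have hexp : Complex.exp (-Complex.I * ((x*y*c : ℝ) : ℂ)) *
      Complex.exp ((((-0 * ((x*co⁻¹ - q.1)^2+(y*co⁻¹ - q.2)^2) : ℝ) : ℂ)
        + Complex.I * (((x*co⁻¹ - q.1)*(y*co⁻¹ - q.2)*c : ℝ) : ℂ)) / ((4*0^2+c^2 : ℝ) : ℂ))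
      = Complex.exp (Complex.I *
          ((((x : ℂ) * y + (q.1 : ℂ) * q.2) * ((co : ℝ) : ℂ) -
            ((q.1 : ℂ) * y + (x : ℂ) * q.2)) / ((s : ℝ) : ℂ))) := by
    rw [← Complex.exp_add]
    congr 1
    have hreal : -(x*y*c) + ((x*co⁻¹ - q.1)*(y*co⁻¹ - q.2)*c) / (4*0^2+c^2)
        = ((x*y + q.1*q.2)*co - (q.1*y + x*q.2))/s := by
      rw [hc_def, Real.tan_eq_sin_div_cos, ← hs_def, ← hco_def]
      field_simp
      linear_combination (-(x*y*s^2)) * Real.sin_sq_add_cos_sq t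
    calc -Complex.I * ((x*y*c : ℝ) : ℂ) + (((-0 * ((x*co⁻¹ - q.1)^2+(y*co⁻¹ - q.2)^2) : ℝ) : ℂ)
          + Complex.I * (((x*co⁻¹ - q.1)*(y*co⁻¹ - q.2)*c : ℝ) : ℂ)) / ((4*0^2+c^2 : ℝ) : ℂ)
        = Complex.I * ((( -(x*y*c) + ((x*co⁻¹ - q.1)*(y*co⁻¹ - q.2)*c) / (4*0^2+c^2) : ℝ)) : ℂ) := by
          have : ((4*(0:ℝ)^2+c^2 : ℝ) : ℂ) ≠ 0 := by
            rw [Complex.ofReal_ne_zero]; nlinarith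
          push_cast
          field_simp
          ring
      _ = _ := by
          rw [hreal]
          push_cast [← hs_def, ← hco_def]
          ring
  calc ((((2 * π) ^ 2)⁻¹ : ℝ) : ℂ) * ((co⁻¹ : ℝ) : ℂ) *
        (v q * (Complex.exp (-Complex.I * ((x*y*c : ℝ) : ℂ)) *
          (((2 * π / c : ℝ) : ℂ) * Complex.exp ((((-0 * ((x*co⁻¹ - q.1)^2+(y*co⁻¹ - q.2)^2) : ℝ) : ℂ)
            + Complex.I * (((x*co⁻¹ - q.1)*(y*co⁻¹ - q.2)*c : ℝ) : ℂ)) / ((4*0^2+c^2 : ℝ) : ℂ)))))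
      = ((((2 * π) ^ 2)⁻¹ * co⁻¹ * (2 * π / c) : ℝ) : ℂ) * (v q *
          (Complex.exp (-Complex.I * ((x*y*c : ℝ) : ℂ)) *
            Complex.exp ((((-0 * ((x*co⁻¹ - q.1)^2+(y*co⁻¹ - q.2)^2) : ℝ) : ℂ)
              + Complex.I * (((x*co⁻¹ - q.1)*(y*co⁻¹ - q.2)*c : ℝ) : ℂ)) / ((4*0^2+c^2 : ℝ) : ℂ)))) := by
        push_cast
        ring
    _ = _ := by
        rw [hexp]
        rw [show (((2 * π) ^ 2)⁻¹ * co⁻¹ * (2 * π / c) : ℝ) = ((2*π)⁻¹ * s⁻¹ : ℝ) by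
          rw [hc_def, Real.tan_eq_sin_div_cos, ← hs_def, ← hco_def]
          field_simp]
        push_cast
        ring
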